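/- For all n ≥ n0, s2(n) = (s2(n0) + (2/p)·s1(n0)) · ∏_{k=n0}^{n-1} (k + 2p + p²)/k − (2/p)·s1(n0) · ∏_{k=n0}^{n-1} (k + 2p)/k. Consequently, s2(n) is asymptotically equivalent, as n → ∞, to (s2(n0) + (2/p)·s1(n0)) · (Γ(n0)/Γ(n0 + 2p + p²)) · n^{2p+p²}, provided s2(n0) + (2/p)·s1(n0) > 0. -/

import Mathlib

set_option maxHeartbeats 1000000

open Filter

lemma aux_gammaProdRange (a : ℝ) (ha : 0 < a) (n : ℕ) :
    ∏ j ∈ Finset.range (n+1), (a + (j:ℝ)) = Real.Gamma (a + n + 1) / Real.Gamma a := by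
  induction n with
  | zero =>
      simp only [zero_add, Finset.prod_range_one, Nat.cast_zero, add_zero, Real.Gamma_add_one ha.ne']
      field_simp [(Real.Gamma_pos_of_pos ha).ne']
  | succ n ih =>
      rw [Finset.prod_range_succ, ih]
      have h1 : (0:ℝ) < a + n + 1 := by positivity
      have h2 : Real.Gamma (a + (n+1:ℕ) + 1) = (a + n + 1) * Real.Gamma (a + n + 1) := by
        rw [← Real.Gamma_add_one h1.ne']
        push_cast; ring_nf
      rw [h2]
      push_cast
      field_simp [(Real.Gamma_pos_of_pos ha).ne']
      ring

lemma aux_gammaRatio (a : ℝ) (ha : 0 < a) :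
    Tendsto (fun n : ℕ => Real.Gamma ((n:ℝ) + a) / (Real.Gamma n * (n:ℝ) ^ a))
      atTop (nhds 1) := by
  have hΓa : 0 < Real.Gamma a := Real.Gamma_pos_of_pos ha
  have hu : Tendsto (fun n : ℕ => (n:ℝ)^a * (n.factorial : ℝ) / Real.Gamma (a + n + 1)) atTop
      (nhds 1) := by
    have h := (Real.GammaSeq_tendsto_Gamma a).div_const (Real.Gamma a)
    rw [div_self hΓa.ne'] at h
    refine h.congr fun n => ?_
    have hΓn : (0:ℝ) < Real.Gamma (a + n + 1) := Real.Gamma_pos_of_pos (by positivity)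
    rw [Real.GammaSeq, aux_gammaProdRange a ha n]
    field_simp
  rw [← tendsto_add_atTop_iff_nat 1]
  have hq : Tendsto (fun n : ℕ => ((n:ℝ)/((n:ℝ)+1))^a) atTop (nhds 1) := by
    have h := (tendsto_natCast_div_add_atTop (1:ℝ)).rpow_const (p := a) (Or.inr ha.le)
    simpa using h
  have hm := ((hu.inv₀ one_ne_zero).mul hq)
  rw [show ((1:ℝ)⁻¹ * 1) = 1 by norm_num] at hm
  refine hm.congr' ?_
  filter_upwards [eventually_ge_atTop 1] with n hn
  have hn0 : (0:ℝ) < (n:ℝ) := by exact_mod_cast hn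
  have hΓn : (0:ℝ) < Real.Gamma (a + n + 1) := Real.Gamma_pos_of_pos (by positivity)
  have hfact : (0:ℝ) < (n.factorial : ℝ) := by exact_mod_cast n.factorial_pos
  have hrpow : (0:ℝ) < (n:ℝ) ^ a := Real.rpow_pos_of_pos hn0 a
  have hrpow1 : (0:ℝ) < ((n:ℝ)+1) ^ a := Real.rpow_pos_of_pos (by positivity) a
  have hcast : ((n+1:ℕ):ℝ) = (n:ℝ) + 1 := by push_cast; ring
  have hΓfact : Real.Gamma ((n:ℝ) + 1) = (n.factorial : ℝ) := Real.Gamma_nat_eq_factorial n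
  have hdiv : ((n:ℝ)/((n:ℝ)+1))^a = (n:ℝ)^a / ((n:ℝ)+1)^a :=
    Real.div_rpow hn0.le (by positivity : (0:ℝ) ≤ (n:ℝ)+1) a
  rw [hdiv, hcast, hΓfact, show (n:ℝ) + 1 + a = a + n + 1 by ring]
  field_simp

lemma aux_prodIco (a : ℝ) (ha : 0 < a) (n0 : ℕ) (hn0 : 1 ≤ n0) :
    ∀ n, n0 ≤ n → ∏ k ∈ Finset.Ico n0 n, (((k:ℝ) + a) / k)
      = Real.Gamma ((n:ℝ) + a) * Real.Gamma n0 / (Real.Gamma ((n0:ℝ) + a) * Real.Gamma n) := by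
  refine Nat.le_induction ?_ ?_
  · have h1 : (0:ℝ) < Real.Gamma ((n0:ℝ) + a) := Real.Gamma_pos_of_pos (by positivity)
    have h2 : (0:ℝ) < Real.Gamma (n0:ℝ) :=
      Real.Gamma_pos_of_pos (by exact_mod_cast hn0)
    simp [Finset.Ico_self]
    field_simp
  · intro n hn ih
    have hn1 : (1:ℕ) ≤ n := le_trans hn0 hn
    have hnr : (0:ℝ) < (n:ℝ) := by exact_mod_cast hn1
    have hΓn : (0:ℝ) < Real.Gamma (n:ℝ) := Real.Gamma_pos_of_pos hnr
    have hΓna : (0:ℝ) < Real.Gamma ((n:ℝ) + a) := Real.Gamma_pos_of_pos (by positivity)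
    have hΓn0 : (0:ℝ) < Real.Gamma (n0:ℝ) :=
      Real.Gamma_pos_of_pos (by exact_mod_cast hn0)
    have hΓn0a : (0:ℝ) < Real.Gamma ((n0:ℝ) + a) := Real.Gamma_pos_of_pos (by positivity)
    rw [Finset.prod_Ico_succ_top hn, ih]
    have e1 : Real.Gamma (((n+1:ℕ)):ℝ) = (n:ℝ) * Real.Gamma n := by
      rw [show (((n+1:ℕ)):ℝ) = (n:ℝ) + 1 by push_cast; ring, Real.Gamma_add_one hnr.ne']
    have e2 : Real.Gamma (((n+1:ℕ):ℝ) + a) = ((n:ℝ) + a) * Real.Gamma ((n:ℝ) + a) := by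
      rw [show ((n+1:ℕ):ℝ) + a = ((n:ℝ) + a) + 1 by push_cast; ring,
        Real.Gamma_add_one (by positivity)]
    rw [e1, e2]
    field_simp

theorem stmt_15 (p : ℝ) (hp0 : 0 < p) (hp1 : p ≤ 1) (n0 : ℕ) (hn0 : 1 ≤ n0)
    (s1 s2 : ℕ → ℝ)
    (h1nn : ∀ n, n0 ≤ n → 0 ≤ s1 n) (h2nn : ∀ n, n0 ≤ n → 0 ≤ s2 n)
    (hrec1 : ∀ n, n0 ≤ n → s1 (n + 1) = (1 + 2 * p / n) * s1 n)
    (hrec2 : ∀ n, n0 ≤ n →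
      s2 (n + 1) = (1 + (2 * p + p ^ 2) / n) * s2 n + (2 * p / n) * s1 n) :
    (∀ n, n0 ≤ n →
      s2 n = (s2 n0 + 2 / p * s1 n0) * ∏ k ∈ Finset.Ico n0 n, (((k : ℝ) + 2 * p + p ^ 2) / k)
        - 2 / p * s1 n0 * ∏ k ∈ Finset.Ico n0 n, (((k : ℝ) + 2 * p) / k)) ∧
    (0 < s2 n0 + 2 / p * s1 n0 →
      Tendsto (fun n : ℕ => s2 n /
          ((s2 n0 + 2 / p * s1 n0) *
            (Real.Gamma (n0 : ℝ) / Real.Gamma ((n0 : ℝ) + 2 * p + p ^ 2)) *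
            (n : ℝ) ^ (2 * p + p ^ 2)))
        atTop (nhds 1)) := by
  have hA : (0:ℝ) < 2 * p + p ^ 2 := by positivity
  have hB : (0:ℝ) < 2 * p := by positivity
  -- closed form for s1
  have h1c : ∀ n, n0 ≤ n → s1 n = s1 n0 * ∏ k ∈ Finset.Ico n0 n, (((k:ℝ) + 2 * p) / k) := by
    refine Nat.le_induction (by simp) ?_
    intro n hn ih
    have hnr : (0:ℝ) < (n:ℝ) := by exact_mod_cast le_trans hn0 hn
    rw [hrec1 n hn, ih, Finset.prod_Ico_succ_top hn]
    field_simp [hnr.ne']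
  have part1 : ∀ n, n0 ≤ n →
      s2 n = (s2 n0 + 2 / p * s1 n0) * ∏ k ∈ Finset.Ico n0 n, (((k : ℝ) + 2 * p + p ^ 2) / k)
        - 2 / p * s1 n0 * ∏ k ∈ Finset.Ico n0 n, (((k : ℝ) + 2 * p) / k) := by
    refine Nat.le_induction (by simp) ?_
    intro n hn ih
    have hnr : (0:ℝ) < (n:ℝ) := by exact_mod_cast le_trans hn0 hn
    rw [hrec2 n hn, ih, h1c n hn, Finset.prod_Ico_succ_top hn, Finset.prod_Ico_succ_top hn]
    set PA := ∏ k ∈ Finset.Ico n0 n, (((k : ℝ) + 2 * p + p ^ 2) / k) with hPAd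
    set PB := ∏ k ∈ Finset.Ico n0 n, (((k : ℝ) + 2 * p) / k) with hPBd
    field_simp
    ring
  refine ⟨part1, fun hC => ?_⟩
  set A : ℝ := 2 * p + p ^ 2 with hAdef
  set B : ℝ := 2 * p with hBdef
  set C : ℝ := s2 n0 + 2 / p * s1 n0 with hCdef
  set D : ℝ := 2 / p * s1 n0 with hDdef
  have hn0r : (0:ℝ) < (n0:ℝ) := by exact_mod_cast hn0
  have hΓn0 : (0:ℝ) < Real.Gamma (n0:ℝ) := Real.Gamma_pos_of_pos hn0r
  have hΓn0A : (0:ℝ) < Real.Gamma ((n0:ℝ) + A) := Real.Gamma_pos_of_pos (by positivity)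
  have hΓn0B : (0:ℝ) < Real.Gamma ((n0:ℝ) + B) := Real.Gamma_pos_of_pos (by positivity)
  set K : ℝ := D * Real.Gamma ((n0:ℝ) + A) / (C * Real.Gamma ((n0:ℝ) + B)) with hKdef
  have hp2 : (0:ℝ) < p ^ 2 := by positivity
  have hzero : Tendsto (fun n : ℕ => (n:ℝ) ^ (-(p^2))) atTop (nhds 0) :=
    (tendsto_rpow_neg_atTop hp2).comp tendsto_natCast_atTop_atTop
  have hlim : Tendsto (fun n : ℕ =>
      Real.Gamma ((n:ℝ) + A) / (Real.Gamma n * (n:ℝ) ^ A)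
      - K * (Real.Gamma ((n:ℝ) + B) / (Real.Gamma n * (n:ℝ) ^ B)) * (n:ℝ) ^ (-(p^2)))
      atTop (nhds 1) := by
    have h := (aux_gammaRatio A hA).sub
      (((aux_gammaRatio B hB).const_mul K).mul hzero)
    simpa using h
  refine hlim.congr' ?_
  filter_upwards [eventually_ge_atTop n0] with n hn
  have hn1 : (1:ℕ) ≤ n := le_trans hn0 hn
  have hnr : (0:ℝ) < (n:ℝ) := by exact_mod_cast hn1
  have hΓn : (0:ℝ) < Real.Gamma (n:ℝ) := Real.Gamma_pos_of_pos hnr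
  have hΓnA : (0:ℝ) < Real.Gamma ((n:ℝ) + A) := Real.Gamma_pos_of_pos (by positivity)
  have hΓnB : (0:ℝ) < Real.Gamma ((n:ℝ) + B) := Real.Gamma_pos_of_pos (by positivity)
  have hrA : (0:ℝ) < (n:ℝ) ^ A := Real.rpow_pos_of_pos hnr A
  have hrB : (0:ℝ) < (n:ℝ) ^ B := Real.rpow_pos_of_pos hnr B
  have hrp : (0:ℝ) < (n:ℝ) ^ (p^2) := Real.rpow_pos_of_pos hnr _
  have eA : (n:ℝ) ^ A = (n:ℝ) ^ B * (n:ℝ) ^ (p^2) := by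
    rw [← Real.rpow_add hnr]
  have eneg : (n:ℝ) ^ (-(p^2)) = ((n:ℝ) ^ (p^2))⁻¹ := Real.rpow_neg hnr.le _
  have hPA := aux_prodIco A hA n0 hn0 n hn
  have hPB := aux_prodIco B hB n0 hn0 n hn
  have hs2 := part1 n hn
  simp only [show ∀ k : ℝ, k + B + p ^ 2 = k + A from fun k => by rw [hAdef, hBdef]; ring] at hs2
  rw [show (n0:ℝ) + B + p ^ 2 = (n0:ℝ) + A by rw [hAdef, hBdef]; ring]
  rw [hs2, hPA, hPB, eA, eneg, hKdef]
  field_simp [hC.ne', hΓn0.ne', hΓn0A.ne', hΓn0B.ne', hΓn.ne', hrB.ne', hrp.ne']
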